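/- arXiv:1310.7977 — 2 statements merged into one kernel-verified Lean document; each statement's English description precedes it below -/
import Mathlib

section
/- Define the height h(x) of a point x ∈ S² to be the least positive integer h such that √h·x has integer coordinates (when it exists). If x ∈ S² has height h(x) and γ is a Hurwitz quaternion of norm n(γ) such that γ·x ∉ {x, -x}, where γ·x = γ x γ̄ / n(γ) is the rotation action, then the inner product satisfies -n(γ)h(x) + 1/2 ≤ n(γ)h(x)·⟨γ·x, x⟩ ≤ n(γ)h(x) - 1/2. -/
open Quaternion

/-- `γ` is a Hurwitz quaternion: `γ = (a + bi + cj + dk)/2` with `a,b,c,d ∈ ℤ`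
all of the same parity. -/
def IsHurwitz (γ : ℍ[ℝ]) : Prop :=
  ∃ a b c d : ℤ, a % 2 = b % 2 ∧ b % 2 = c % 2 ∧ c % 2 = d % 2 ∧
    γ = ⟨(a : ℝ) / 2, (b : ℝ) / 2, (c : ℝ) / 2, (d : ℝ) / 2⟩

/-- `√h · x` has integer coordinates (for `x` a pure quaternion). -/
def IntCoords (h : ℕ) (x : ℍ[ℝ]) : Prop :=
  ∃ u v w : ℤ, Real.sqrt h * x.imI = u ∧ Real.sqrt h * x.imJ = v ∧ Real.sqrt h * x.imK = w

/-- `h` is the height of `x`: the least positive integer such that `√h·x` has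
integer coordinates. -/
def HasHeight (x : ℍ[ℝ]) (h : ℕ) : Prop :=
  0 < h ∧ IntCoords h x ∧ ∀ k : ℕ, 0 < k → IntCoords k x → h ≤ k

/-- The rotation action of a nonzero quaternion on pure quaternions:
`γ·x = γ x γ̄ / n(γ)`. -/
noncomputable def quatAct (γ x : ℍ[ℝ]) : ℍ[ℝ] :=
  (Quaternion.normSq γ)⁻¹ • (γ * x * star γ)

/-- The Euclidean inner product of two pure quaternions: `⟨p,q⟩ = -re(pq)`. -/
noncomputable def pureInner (p q : ℍ[ℝ]) : ℝ := -(p * q).re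

/-- Real part of `γ x γ̄` vanishes for pure `x`. -/
lemma act_re_zero (γ x : ℍ[ℝ]) (hx : x.re = 0) : (γ * x * star γ).re = 0 := by
  simp only [Quaternion.re_mul, Quaternion.re_star, Quaternion.imI_star,
    Quaternion.imJ_star, Quaternion.imK_star, Quaternion.imI_mul,
    Quaternion.imJ_mul, Quaternion.imK_mul, hx]
  ring

/-- Explicit formula for `4·re(γ x γ̄ x)` when `γ = (a+bi+cj+dk)/2` and `x` pure. -/
lemma quad_re (a b c d : ℝ) (γ x : ℍ[ℝ]) (hγr : γ.re = a / 2) (hγi : γ.imI = b / 2)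
    (hγj : γ.imJ = c / 2) (hγk : γ.imK = d / 2) (hx : x.re = 0) :
    (γ * x * star γ * x).re * 4 =
      -d^2*x.imK^2 + d^2*x.imJ^2 + d^2*x.imI^2 - 4*c*d*x.imJ*x.imK + c^2*x.imK^2
        - c^2*x.imJ^2 + c^2*x.imI^2 - 4*b*d*x.imI*x.imK - 4*b*c*x.imI*x.imJ
        + b^2*x.imK^2 + b^2*x.imJ^2 - b^2*x.imI^2 - a^2*x.imK^2 - a^2*x.imJ^2
        - a^2*x.imI^2 := by
  simp only [Quaternion.re_mul, Quaternion.imI_mul, Quaternion.imJ_mul, Quaternion.imK_mul,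
    Quaternion.re_star, Quaternion.imI_star, Quaternion.imJ_star, Quaternion.imK_star,
    hx, hγr, hγi, hγj, hγk]
  ring

set_option maxHeartbeats 2000000 in
/-- If `x ∈ S²` has height `h(x)` and `γ` is a nonzero Hurwitz quaternion with
`γ·x ∉ {x, -x}`, then `-n(γ)h(x) + 1/2 ≤ n(γ)h(x)·⟨γ·x,x⟩ ≤ n(γ)h(x) - 1/2`. -/
theorem hurwitz_inner_half_integer_gap (x : ℍ[ℝ]) (hre : x.re = 0)
    (hnorm : Quaternion.normSq x = 1) (h : ℕ) (hh : HasHeight x h)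
    (γ : ℍ[ℝ]) (hγ : IsHurwitz γ) (hγ0 : γ ≠ 0)
    (h1 : quatAct γ x ≠ x) (h2 : quatAct γ x ≠ -x) :
    -(Quaternion.normSq γ * h) + 1 / 2 ≤
        Quaternion.normSq γ * h * pureInner (quatAct γ x) x ∧
      Quaternion.normSq γ * h * pureInner (quatAct γ x) x ≤
        Quaternion.normSq γ * h - 1 / 2 := by
  obtain ⟨a, b, c, d, pab, pbc, pcd, hγdef⟩ := hγ
  obtain ⟨hhpos, ⟨u, v, w, hu, hv, hw⟩, -⟩ := hh
  set n : ℝ := Quaternion.normSq γ with hn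
  have hn0 : n ≠ 0 := Quaternion.normSq_ne_zero.mpr hγ0
  have hnpos : 0 < n := lt_of_le_of_ne Quaternion.normSq_nonneg (Ne.symm hn0)
  -- parity decomposition
  set e : ℤ := a % 2 with he
  obtain ⟨a', ha'⟩ : ∃ a', a = 2 * a' + e := ⟨a / 2, by omega⟩
  obtain ⟨b', hb'⟩ : ∃ b', b = 2 * b' + e := ⟨b / 2, by omega⟩
  obtain ⟨c', hc'⟩ : ∃ c', c = 2 * c' + e := ⟨c / 2, by omega⟩
  obtain ⟨d', hd'⟩ : ∃ d', d = 2 * d' + e := ⟨d / 2, by omega⟩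
  have he01 : e = 0 ∨ e = 1 := by omega
  -- the norm of γ is a (positive) integer N
  obtain ⟨N, hN⟩ : ∃ N : ℤ, a ^ 2 + b ^ 2 + c ^ 2 + d ^ 2 = 4 * N := by
    rcases he01 with he0 | he1
    · exact ⟨a' ^ 2 + b' ^ 2 + c' ^ 2 + d' ^ 2, by rw [ha', hb', hc', hd', he0]; ring⟩
    · exact ⟨a' ^ 2 + a' + b' ^ 2 + b' + c' ^ 2 + c' + d' ^ 2 + d' + 1,
        by rw [ha', hb', hc', hd', he1]; ring⟩
  have hnN : n = (N : ℝ) := by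
    have : n = ((a : ℝ) ^ 2 + (b : ℝ) ^ 2 + (c : ℝ) ^ 2 + (d : ℝ) ^ 2) / 4 := by
      rw [hn, Quaternion.normSq_def', hγdef]; dsimp only; ring
    rw [this]
    have : ((a : ℝ) ^ 2 + (b : ℝ) ^ 2 + (c : ℝ) ^ 2 + (d : ℝ) ^ 2) = 4 * (N : ℝ) := by
      exact_mod_cast congrArg (Int.cast : ℤ → ℝ) hN
    rw [this]; ring
  -- the integer value of the key quantity
  obtain ⟨m, hm⟩ : ∃ m : ℤ,
      -d^2*w^2 + d^2*v^2 + d^2*u^2 - 4*c*d*v*w + c^2*w^2 - c^2*v^2 + c^2*u^2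
        - 4*b*d*u*w - 4*b*c*u*v + b^2*w^2 + b^2*v^2 - b^2*u^2 - a^2*w^2 - a^2*v^2
        - a^2*u^2 = 4 * m := by
    rcases he01 with he0 | he1
    · refine ⟨-d'^2*w^2 + d'^2*v^2 + d'^2*u^2 - 4*c'*d'*v*w + c'^2*w^2 - c'^2*v^2
        + c'^2*u^2 - 4*b'*d'*u*w - 4*b'*c'*u*v + b'^2*w^2 + b'^2*v^2 - b'^2*u^2
        - a'^2*w^2 - a'^2*v^2 - a'^2*u^2, ?_⟩
      rw [ha', hb', hc', hd', he0]; ring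
    · refine ⟨-v*w - u*w - u*v - d'*w^2 - 2*d'*v*w + d'*v^2 - 2*d'*u*w + d'*u^2
        - d'^2*w^2 + d'^2*v^2 + d'^2*u^2 + c'*w^2 - 2*c'*v*w - c'*v^2 - 2*c'*u*v
        + c'*u^2 - 4*c'*d'*v*w + c'^2*w^2 - c'^2*v^2 + c'^2*u^2 + b'*w^2 + b'*v^2
        - 2*b'*u*w - 2*b'*u*v - b'*u^2 - 4*b'*d'*u*w - 4*b'*c'*u*v + b'^2*w^2
        + b'^2*v^2 - b'^2*u^2 - a'*w^2 - a'*v^2 - a'*u^2 - a'^2*w^2 - a'^2*v^2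
        - a'^2*u^2, ?_⟩
      rw [ha', hb', hc', hd', he1]; ring
  -- compute the key quantity:  n * h * ⟨γ·x, x⟩ = -m
  have hspos : 0 < Real.sqrt h := Real.sqrt_pos.mpr (by exact_mod_cast hhpos)
  have hsne : Real.sqrt h ≠ 0 := ne_of_gt hspos
  have hs2 : Real.sqrt h * Real.sqrt h = (h : ℝ) :=
    Real.mul_self_sqrt (by positivity)
  have hxi : x.imI = (u : ℝ) / Real.sqrt h := by
    rw [eq_div_iff hsne, mul_comm]; exact hu
  have hxj : x.imJ = (v : ℝ) / Real.sqrt h := by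
    rw [eq_div_iff hsne, mul_comm]; exact hv
  have hxk : x.imK = (w : ℝ) / Real.sqrt h := by
    rw [eq_div_iff hsne, mul_comm]; exact hw
  have hγr : γ.re = (a : ℝ) / 2 := by rw [hγdef]
  have hγi : γ.imI = (b : ℝ) / 2 := by rw [hγdef]
  have hγj : γ.imJ = (c : ℝ) / 2 := by rw [hγdef]
  have hγk : γ.imK = (d : ℝ) / 2 := by rw [hγdef]
  have hq4 := quad_re (a : ℝ) (b : ℝ) (c : ℝ) (d : ℝ) γ x hγr hγi hγj hγk hre
  have hre2 : (h : ℝ) * (γ * x * star γ * x).re = (m : ℝ) := by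
    have h4 : -(d:ℝ)^2*(w:ℝ)^2 + (d:ℝ)^2*(v:ℝ)^2 + (d:ℝ)^2*(u:ℝ)^2 - 4*(c:ℝ)*(d:ℝ)*(v:ℝ)*(w:ℝ) + (c:ℝ)^2*(w:ℝ)^2 - (c:ℝ)^2*(v:ℝ)^2 + (c:ℝ)^2*(u:ℝ)^2 - 4*(b:ℝ)*(d:ℝ)*(u:ℝ)*(w:ℝ) - 4*(b:ℝ)*(c:ℝ)*(u:ℝ)*(v:ℝ) + (b:ℝ)^2*(w:ℝ)^2 + (b:ℝ)^2*(v:ℝ)^2 - (b:ℝ)^2*(u:ℝ)^2 - (a:ℝ)^2*(w:ℝ)^2 - (a:ℝ)^2*(v:ℝ)^2 - (a:ℝ)^2*(u:ℝ)^2 = 4 * (m : ℝ) := by exact_mod_cast hm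
    have expand : (h : ℝ) * ((γ * x * star γ * x).re * 4) = -(d:ℝ)^2*(w:ℝ)^2 + (d:ℝ)^2*(v:ℝ)^2 + (d:ℝ)^2*(u:ℝ)^2 - 4*(c:ℝ)*(d:ℝ)*(v:ℝ)*(w:ℝ) + (c:ℝ)^2*(w:ℝ)^2 - (c:ℝ)^2*(v:ℝ)^2 + (c:ℝ)^2*(u:ℝ)^2 - 4*(b:ℝ)*(d:ℝ)*(u:ℝ)*(w:ℝ) - 4*(b:ℝ)*(c:ℝ)*(u:ℝ)*(v:ℝ) + (b:ℝ)^2*(w:ℝ)^2 + (b:ℝ)^2*(v:ℝ)^2 - (b:ℝ)^2*(u:ℝ)^2 - (a:ℝ)^2*(w:ℝ)^2 - (a:ℝ)^2*(v:ℝ)^2 - (a:ℝ)^2*(u:ℝ)^2 := by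
      rw [hq4, hxi, hxj, hxk]
      generalize hS : Real.sqrt h = s at hs2 hsne ⊢
      rw [← hs2]
      field_simp
    have := expand.trans h4
    linarith [this]
  -- pureInner p x  in terms of the real part above
  set p : ℍ[ℝ] := quatAct γ x with hp
  have hPIval : n * (h : ℝ) * pureInner p x = -(m : ℝ) := by
    have hmul : p * x = n⁻¹ • (γ * x * star γ * x) := by
      rw [hp, quatAct, smul_mul_assoc]
    have : pureInner p x = -(n⁻¹ * (γ * x * star γ * x).re) := by
      rw [pureInner, hmul]; rw [Quaternion.re_smul]; rfl
    rw [this]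
    have hr : n * (h : ℝ) * -(n⁻¹ * (γ * x * star γ * x).re) =
        -(n * n⁻¹ * ((h : ℝ) * (γ * x * star γ * x).re)) := by ring
    rw [hr, mul_inv_cancel₀ hn0, one_mul, hre2]
  -- p is a pure unit quaternion
  have hpre : p.re = 0 := by
    rw [hp, quatAct, Quaternion.re_smul, act_re_zero γ x hre, smul_zero]
  have hpnorm : Quaternion.normSq p = 1 := by
    rw [hp, quatAct, Quaternion.normSq_smul, map_mul, map_mul,
      Quaternion.normSq_star, hnorm, ← hn, mul_one]
    rw [inv_pow, inv_mul_eq_div, div_eq_one_iff_eq (by positivity)]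
    ring
  -- strict Cauchy–Schwarz bounds
  have hPId : pureInner p x = p.imI * x.imI + p.imJ * x.imJ + p.imK * x.imK := by
    rw [pureInner, Quaternion.re_mul, hre, hpre]; ring
  have hx' := hnorm; have hp' := hpnorm
  rw [Quaternion.normSq_def'] at hx' hp'
  rw [hre] at hx'
  rw [hpre] at hp'
  have hub : pureInner p x < 1 := by
    have hne : p - x ≠ 0 := sub_ne_zero.mpr h1
    have hpos : 0 < Quaternion.normSq (p - x) :=
      lt_of_le_of_ne Quaternion.normSq_nonneg
        (Ne.symm (Quaternion.normSq_ne_zero.mpr hne))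
    rw [Quaternion.normSq_def'] at hpos
    simp only [Quaternion.re_sub, Quaternion.imI_sub, Quaternion.imJ_sub,
      Quaternion.imK_sub, hre, hpre] at hpos
    have key : (p.imI - x.imI)^2 + (p.imJ - x.imJ)^2 + (p.imK - x.imK)^2 =
        2 - 2 * pureInner p x := by
      rw [hPId]; linear_combination hx' + hp'
    rw [hPId] at key ⊢
    nlinarith [hpos, key]
  have hlb : -1 < pureInner p x := by
    have hne : p + x ≠ 0 := by
      intro hcon
      exact h2 (by rw [eq_neg_of_add_eq_zero_left hcon])
    have hpos : 0 < Quaternion.normSq (p + x) :=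
      lt_of_le_of_ne Quaternion.normSq_nonneg
        (Ne.symm (Quaternion.normSq_ne_zero.mpr hne))
    rw [Quaternion.normSq_def'] at hpos
    simp only [Quaternion.re_add, Quaternion.imI_add, Quaternion.imJ_add,
      Quaternion.imK_add, hre, hpre] at hpos
    have key : (p.imI + x.imI)^2 + (p.imJ + x.imJ)^2 + (p.imK + x.imK)^2 =
        2 + 2 * pureInner p x := by
      rw [hPId]; linear_combination hx' + hp'
    rw [hPId] at key ⊢
    nlinarith [hpos, key]
  -- conclude
  have hnh : (0 : ℝ) < n * h := by
    have : (0:ℝ) < (h:ℝ) := by exact_mod_cast hhpos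
    positivity
  have hlt1 : n * (h : ℝ) * pureInner p x < n * h := by
    have := (mul_lt_mul_iff_right₀ hnh).mpr hub
    rw [mul_one] at this
    exact this
  have hgt1 : -(n * (h:ℝ)) < n * (h : ℝ) * pureInner p x := by
    have := (mul_lt_mul_iff_right₀ hnh).mpr hlb
    linarith [this]
  -- integrality: -(m) is an integer strictly between -(N*h) and N*h
  have hcast : n * (h : ℝ) = ((N * (h:ℤ) : ℤ) : ℝ) := by
    rw [hnN]; push_cast; ring
  have hmlt : -m < N * (h : ℤ) := by
    have : (-(m:ℝ)) < ((N * (h:ℤ) : ℤ) : ℝ) := by rw [← hcast, ← hPIval]; exact hlt1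
    exact_mod_cast this
  have hmgt : -(N * (h:ℤ)) < -m := by
    have : -(((N * (h:ℤ) : ℤ)) : ℝ) < -(m:ℝ) := by rw [← hcast, ← hPIval]; exact hgt1
    exact_mod_cast this
  have hmle : -m ≤ N * (h:ℤ) - 1 := by omega
  have hmge : -(N * (h:ℤ)) + 1 ≤ -m := by omega
  constructor
  · rw [hPIval, hcast]
    have : ((-(N * (h:ℤ)) + 1 : ℤ) : ℝ) ≤ (-m : ℝ) := by exact_mod_cast hmge
    push_cast at this ⊢
    linarith
  · rw [hPIval, hcast]
    have : ((-m : ℤ) : ℝ) ≤ ((N * (h:ℤ) - 1 : ℤ) : ℝ) := by exact_mod_cast hmle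
    push_cast at this ⊢
    linarith
end

section
/- Let x ∈ S² have height h(x) (i.e., √(h(x))·x ∈ ℤ³ with h(x) minimal positive). If γ is a Hurwitz quaternion with γ·x ∉ {x,-x}, then the spherical distance satisfies 1/√(n(γ)h(x)) ≤ d(γ·x, x) ≤ π - 1/√(n(γ)h(x)), where d(u,v) = arccos⟨u,v⟩. -/
open Quaternion

/-- The spherical distance `d(u,v) = arccos⟨u,v⟩` between unit pure quaternions. -/
noncomputable def sphDist (p q : ℍ[ℝ]) : ℝ := Real.arccos (pureInner p q)

set_option maxHeartbeats 4000000 in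
/-- If `x ∈ S²` has height `h(x)` and `γ` is a nonzero Hurwitz quaternion with
`γ·x ∉ {x,-x}`, then `1/√(n(γ)h(x)) ≤ d(γ·x, x) ≤ π - 1/√(n(γ)h(x))`. -/
theorem hurwitz_moves_point (x : ℍ[ℝ]) (hre : x.re = 0)
    (hnorm : Quaternion.normSq x = 1) (h : ℕ) (hh : HasHeight x h)
    (γ : ℍ[ℝ]) (hγ : IsHurwitz γ) (hγ0 : γ ≠ 0)
    (h1 : quatAct γ x ≠ x) (h2 : quatAct γ x ≠ -x) :
    1 / Real.sqrt (Quaternion.normSq γ * h) ≤ sphDist (quatAct γ x) x ∧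
      sphDist (quatAct γ x) x ≤ Real.pi - 1 / Real.sqrt (Quaternion.normSq γ * h) := by
  obtain ⟨a, b, c, d, hab, hbc, hcd, hγeq⟩ := hγ
  obtain ⟨hhpos, ⟨u, v, w, hu, hv, hw⟩, -⟩ := hh
  have hhR : (0:ℝ) < (h:ℝ) := by exact_mod_cast hhpos
  set t : ℝ := Real.sqrt h with hts
  have htpos : 0 < t := Real.sqrt_pos.2 hhR
  have ht0 : t ≠ 0 := ne_of_gt htpos
  have ht2 : t ^ 2 = (h:ℝ) := Real.sq_sqrt hhR.le
  have hxI : x.imI = (u:ℝ) / t := by rw [eq_div_iff ht0]; linear_combination hu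
  have hxJ : x.imJ = (v:ℝ) / t := by rw [eq_div_iff ht0]; linear_combination hv
  have hxK : x.imK = (w:ℝ) / t := by rw [eq_div_iff ht0]; linear_combination hw
  -- components of γ
  have hgre : γ.re = (a : ℝ) / 2 := by rw [hγeq]
  have hgI : γ.imI = (b : ℝ) / 2 := by rw [hγeq]
  have hgJ : γ.imJ = (c : ℝ) / 2 := by rw [hγeq]
  have hgK : γ.imK = (d : ℝ) / 2 := by rw [hγeq]
  set A : ℤ := a ^ 2 + b ^ 2 + c ^ 2 + d ^ 2 with hA
  -- A is positive
  have hAZ : 0 < A := by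
    rcases lt_or_eq_of_le (by positivity : (0:ℤ) ≤ A) with hlt | heq
    · exact hlt
    · exfalso
      have hsq : ∀ z : ℤ, z ^ 2 ≤ 0 → z = 0 := fun z hz =>
        pow_eq_zero_iff two_ne_zero |>.mp (le_antisymm hz (sq_nonneg z))
      have ha0 : a = 0 := hsq a (by nlinarith [sq_nonneg b, sq_nonneg c, sq_nonneg d])
      have hb0 : b = 0 := hsq b (by nlinarith [sq_nonneg a, sq_nonneg c, sq_nonneg d])
      have hc0 : c = 0 := hsq c (by nlinarith [sq_nonneg a, sq_nonneg b, sq_nonneg d])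
      have hd0 : d = 0 := hsq d (by nlinarith [sq_nonneg a, sq_nonneg b, sq_nonneg c])
      apply hγ0
      rw [hγeq, ha0, hb0, hc0, hd0]
      ext <;> simp [Quaternion.ext_iff] <;> rfl
  have hA4 : Quaternion.normSq γ = (A : ℝ) / 4 := by
    rw [Quaternion.normSq_def', hgre, hgI, hgJ, hgK, hA]
    push_cast
    ring
  have hARpos : (0:ℝ) < (A:ℝ) := by exact_mod_cast hAZ
  have hAhpos : (0:ℝ) < (A:ℝ) * (h:ℝ) := mul_pos hARpos hhR
  set M : ℤ := a^2*(u^2+v^2+w^2) + b^2*(u^2-v^2-w^2) + c^2*(-u^2+v^2-w^2)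
      + d^2*(-u^2-v^2+w^2) + 4*b*c*u*v + 4*b*d*u*w + 4*c*d*v*w with hM
  -- the key identity
  have hnre : -((γ * x * star γ * x).re) = (M : ℝ) / (4 * t ^ 2) := by
    simp only [Quaternion.re_mul, Quaternion.imI_mul, Quaternion.imJ_mul, Quaternion.imK_mul,
      Quaternion.re_star, Quaternion.imI_star, Quaternion.imJ_star, Quaternion.imK_star,
      hre, hxI, hxJ, hxK, hgre, hgI, hgJ, hgK, hM]
    push_cast
    field_simp
    ring
  have hnsq0 : Quaternion.normSq γ ≠ 0 := Quaternion.normSq_ne_zero.2 hγ0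
  have key : pureInner (quatAct γ x) x = (M : ℝ) / ((A:ℝ) * (h:ℝ)) := by
    have hmul : quatAct γ x * x = (Quaternion.normSq γ)⁻¹ • (γ * x * star γ * x) := by
      rw [quatAct, smul_mul_assoc]
    rw [pureInner, hmul, Quaternion.re_smul, smul_eq_mul, hA4, ← ht2]
    calc -(((A:ℝ)/4)⁻¹ * (γ * x * star γ * x).re)
        = ((A:ℝ)/4)⁻¹ * (-((γ * x * star γ * x).re)) := by ring
      _ = ((A:ℝ)/4)⁻¹ * ((M:ℝ)/(4*t^2)) := by rw [hnre]
      _ = (M:ℝ)/((A:ℝ)*t^2) := by field_simp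
  -- the moved point is a unit vector
  have hylen : Quaternion.normSq (quatAct γ x) = 1 := by
    rw [quatAct, Quaternion.normSq_smul, map_mul, map_mul, Quaternion.normSq_star, hnorm]
    field_simp
  have hstarx : star x = -x := by
    ext <;> simp [hre]
  -- strict bounds on the inner product
  have hy2 : (quatAct γ x * x).re = -pureInner (quatAct γ x) x := by
    rw [pureInner]; ring
  have hlt1 : pureInner (quatAct γ x) x < 1 := by
    have hne : quatAct γ x - x ≠ 0 := sub_ne_zero.2 h1
    have hp : 0 < Quaternion.normSq (quatAct γ x - x) :=
      lt_of_le_of_ne (Quaternion.normSq_nonneg) (Ne.symm (Quaternion.normSq_ne_zero.2 hne))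
    have hcalc : Quaternion.normSq (quatAct γ x - x)
        = 2 - 2 * pureInner (quatAct γ x) x := by
      rw [sub_eq_add_neg, Quaternion.normSq_add, hylen, Quaternion.normSq_neg, hnorm,
        star_neg, hstarx, neg_neg, hy2]
      ring
    rw [hcalc] at hp
    linarith
  have hgt1 : -1 < pureInner (quatAct γ x) x := by
    have hne : quatAct γ x + x ≠ 0 := by
      intro hc
      exact h2 (by linear_combination (norm := module) hc)
    have hp : 0 < Quaternion.normSq (quatAct γ x + x) :=
      lt_of_le_of_ne (Quaternion.normSq_nonneg) (Ne.symm (Quaternion.normSq_ne_zero.2 hne))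
    have hcalc : Quaternion.normSq (quatAct γ x + x)
        = 2 + 2 * pureInner (quatAct γ x) x := by
      rw [Quaternion.normSq_add, hylen, hnorm, hstarx, mul_neg, Quaternion.re_neg, hy2]
      ring
    rw [hcalc] at hp
    linarith
  -- integer bounds
  have hMlt : M < A * h := by
    have : (M:ℝ) < (A:ℝ) * (h:ℝ) := by
      rw [key] at hlt1
      calc (M:ℝ) = (M:ℝ) / ((A:ℝ)*(h:ℝ)) * ((A:ℝ)*(h:ℝ)) := by field_simp
        _ < 1 * ((A:ℝ)*(h:ℝ)) := by
            exact mul_lt_mul_of_pos_right hlt1 hAhpos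
        _ = (A:ℝ)*(h:ℝ) := one_mul _
    exact_mod_cast this
  have hMgt : -(A * (h:ℤ)) < M := by
    have : -((A:ℝ) * (h:ℝ)) < (M:ℝ) := by
      rw [key] at hgt1
      have := mul_lt_mul_of_pos_right hgt1 hAhpos
      rw [div_mul_cancel₀ _ (ne_of_gt hAhpos)] at this
      linarith
    exact_mod_cast this
  -- parity
  have hApar : (2:ℤ) ∣ A := by
    rcases Int.even_or_odd a with ha | ha
    · have ha' := Int.even_iff.mp ha
      have hb : Even b := Int.even_iff.mpr (by omega)
      have hc : Even c := Int.even_iff.mpr (by omega)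
      have hd : Even d := Int.even_iff.mpr (by omega)
      obtain ⟨a', rfl⟩ := ha
      obtain ⟨b', rfl⟩ := hb
      obtain ⟨c', rfl⟩ := hc
      obtain ⟨d', rfl⟩ := hd
      exact ⟨2*a'^2 + 2*b'^2 + 2*c'^2 + 2*d'^2, by rw [hA]; ring⟩
    · have ha' := Int.odd_iff.mp ha
      have hb : Odd b := Int.odd_iff.mpr (by omega)
      have hc : Odd c := Int.odd_iff.mpr (by omega)
      have hd : Odd d := Int.odd_iff.mpr (by omega)
      obtain ⟨a', rfl⟩ := ha
      obtain ⟨b', rfl⟩ := hb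
      obtain ⟨c', rfl⟩ := hc
      obtain ⟨d', rfl⟩ := hd
      exact ⟨2*a'^2+2*a'+2*b'^2+2*b'+2*c'^2+2*c'+2*d'^2+2*d'+2, by rw [hA]; ring⟩
  have hMpar : (2:ℤ) ∣ M := by
    obtain ⟨k, hk⟩ := hApar
    have hk' : a^2+b^2+c^2+d^2 = 2*k := by rw [← hA]; exact hk
    exact ⟨k*(u^2+v^2+w^2) - b^2*(v^2+w^2) - c^2*(u^2+w^2) - d^2*(u^2+v^2)
      + 2*b*c*u*v + 2*b*d*u*w + 2*c*d*v*w,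
      by rw [hM]; linear_combination (u^2+v^2+w^2) * hk'⟩
  have hub : M ≤ A * h - 2 := by
    have hdvd : (2:ℤ) ∣ A * h - M := (Dvd.dvd.mul_right hApar _).sub hMpar
    have h6 := Int.le_of_dvd (by linarith) hdvd
    linarith
  have hlb : -(A * (h:ℤ)) + 2 ≤ M := by
    have hdvd : (2:ℤ) ∣ A * h + M := (Dvd.dvd.mul_right hApar _).add hMpar
    have h6 := Int.le_of_dvd (by linarith) hdvd
    linarith
  -- real bounds on the inner product
  have hMRub : (M:ℝ) ≤ (A:ℝ)*(h:ℝ) - 2 := by exact_mod_cast hub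
  have hMRlb : -((A:ℝ)*(h:ℝ)) + 2 ≤ (M:ℝ) := by exact_mod_cast hlb
  have hubR : pureInner (quatAct γ x) x ≤ 1 - 2 / ((A:ℝ)*(h:ℝ)) := by
    rw [key, div_le_iff₀ hAhpos]
    have he : (1 - 2/((A:ℝ)*(h:ℝ))) * ((A:ℝ)*(h:ℝ)) = (A:ℝ)*(h:ℝ) - 2 := by
      field_simp
    rw [he]
    exact hMRub
  have hlbR : -1 + 2 / ((A:ℝ)*(h:ℝ)) ≤ pureInner (quatAct γ x) x := by
    rw [key, le_div_iff₀ hAhpos]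
    have he : (-1 + 2/((A:ℝ)*(h:ℝ))) * ((A:ℝ)*(h:ℝ)) = -((A:ℝ)*(h:ℝ)) + 2 := by
      field_simp
    rw [he]
    exact hMRlb
  -- final: arccos estimates
  set N : ℝ := Quaternion.normSq γ * (h:ℝ) with hN
  have hNpos : 0 < N := by rw [hN, hA4]; positivity
  set s₀ : ℝ := 1 / Real.sqrt N with hs₀
  have hs₀pos : 0 < s₀ := one_div_pos.mpr (Real.sqrt_pos.2 hNpos)
  have hs₀sq : s₀^2 = 4 / ((A:ℝ)*(h:ℝ)) := by
    rw [hs₀, div_pow, one_pow, Real.sq_sqrt hNpos.le, hN, hA4]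
    rw [div_eq_div_iff (by positivity) hAhpos.ne']
    ring
  have hAh1 : (1:ℝ) ≤ (A:ℝ)*(h:ℝ) := by
    have hZ : (1:ℤ) ≤ A * (h:ℤ) := by nlinarith [hAZ, hhpos]
    exact_mod_cast hZ
  have h44 : 4/((A:ℝ)*(h:ℝ)) ≤ 4 := by
    rw [div_le_iff₀ hAhpos]; linarith
  have hs₀le2 : s₀ ≤ 2 := by nlinarith [sq_nonneg (s₀ - 2)]
  have hs₀pi : s₀ ≤ Real.pi := le_trans hs₀le2 (by linarith [Real.pi_gt_three])
  have harccos_anti : ∀ p q : ℝ, p ≤ q → Real.arccos q ≤ Real.arccos p := by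
    intro p q hpq
    rw [Real.arccos_eq_pi_div_two_sub_arcsin, Real.arccos_eq_pi_div_two_sub_arcsin]
    have := Real.monotone_arcsin hpq
    linarith
  have hq : 1 - s₀^2/2 = 1 - 2/((A:ℝ)*(h:ℝ)) := by rw [hs₀sq]; ring
  have hcosb := Real.one_sub_sq_div_two_le_cos (x := s₀)
  constructor
  · show s₀ ≤ sphDist (quatAct γ x) x
    have hcos₀ : pureInner (quatAct γ x) x ≤ Real.cos s₀ := by linarith
    show s₀ ≤ Real.arccos (pureInner (quatAct γ x) x)
    calc s₀ = Real.arccos (Real.cos s₀) := (Real.arccos_cos hs₀pos.le hs₀pi).symm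
      _ ≤ Real.arccos (pureInner (quatAct γ x) x) := harccos_anti _ _ hcos₀
  · show sphDist (quatAct γ x) x ≤ Real.pi - s₀
    have hπs : Real.cos (Real.pi - s₀) ≤ pureInner (quatAct γ x) x := by
      rw [Real.cos_pi_sub]
      linarith
    show Real.arccos (pureInner (quatAct γ x) x) ≤ Real.pi - s₀
    calc Real.arccos (pureInner (quatAct γ x) x)
        ≤ Real.arccos (Real.cos (Real.pi - s₀)) := harccos_anti _ _ hπs
      _ = Real.pi - s₀ := Real.arccos_cos (by linarith) (by linarith)
end
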